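/- Let g be a finite dimensional Lie algebra over a field k of characteristic 0 with basis β₁*,…,β_m*, structure constants [βᵢ*, βⱼ*] = Σ_ℓ c_{ij}^ℓ β_ℓ*, acting on a commutative k-algebra O by derivations θᵢ = θ(βᵢ*). Let S₀ ∈ O be g-invariant (θᵢ(S₀) = 0 for all i). In the P₀-algebra A = Λ_O(Der(O)) ⊗ Sym(g) ⊗ Λ(g*) (with Der(O) in degree -1, g in degree -2, g* in degree 1, and the canonical bracket of degree 1 pairing g with g* and Der(O) with O), the Faddeev–Popov element S = S₀ + Σᵢ θᵢ βⁱ - ½ Σ_{i,j,ℓ} c_{ij}^ℓ β_ℓ* βⁱ βʲ satisfies the classical master equation [S,S] = 0. -/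

import Mathlib

/-- A `P₀`-algebra over a field `k`: a ℤ-graded (graded-commutative) algebra with a
Poisson bracket of degree `1` satisfying graded antisymmetry, Leibniz rule and
graded Jacobi identity. -/
structure P0Data (k A : Type*) [Field k] [Ring A] [Algebra k A] where
  grade : ℤ → Submodule k A
  internal : DirectSum.IsInternal grade
  one_mem : (1 : A) ∈ grade 0
  mul_mem : ∀ {r s : ℤ} {a b : A}, a ∈ grade r → b ∈ grade s → a * b ∈ grade (r + s)
  gcomm : ∀ {r s : ℤ} {a b : A}, a ∈ grade r → b ∈ grade s →
    a * b = ((-1 : k) ^ (r * s)) • (b * a)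
  bracket : A →ₗ[k] A →ₗ[k] A
  bracket_mem : ∀ {r s : ℤ} {a b : A}, a ∈ grade r → b ∈ grade s →
    bracket a b ∈ grade (r + s + 1)
  antisymm : ∀ {r s : ℤ} {a b : A}, a ∈ grade r → b ∈ grade s →
    bracket a b = -(((-1 : k) ^ ((r - 1) * (s - 1))) • bracket b a)
  leibniz : ∀ {r s : ℤ} {a b : A} (c : A), a ∈ grade r → b ∈ grade s →
    bracket (a * b) c = a * bracket b c + ((-1 : k) ^ (r * s)) • (b * bracket a c)
  jacobi : ∀ {r s t : ℤ} {a b c : A}, a ∈ grade r → b ∈ grade s → c ∈ grade t →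
    ((-1 : k) ^ ((r - 1) * (t - 1))) • bracket (bracket a b) c +
      ((-1 : k) ^ ((s - 1) * (r - 1))) • bracket (bracket b c) a +
      ((-1 : k) ^ ((t - 1) * (s - 1))) • bracket (bracket c a) b = 0

namespace P0Data
variable {k A : Type*} [Field k] [Ring A] [Algebra k A] (P : P0Data k A)

lemma symm0 {a b : A} (ha : a ∈ P.grade 0) (hb : b ∈ P.grade 0) :
    P.bracket a b = P.bracket b a := by
  have h := P.antisymm ha hb
  norm_num at h
  exact h

lemma rightLeibniz {r s t : ℤ} {x b c : A} (hx : x ∈ P.grade r) (hb : b ∈ P.grade s)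
    (hc : c ∈ P.grade t) :
    P.bracket x (b * c)
      = ((-1:k) ^ ((r-1)*(s+t-1)+(t-1)*(r-1))) • (b * P.bracket x c)
      + ((-1:k) ^ ((r-1)*(s+t-1)+s*t+(s-1)*(r-1))) • (c * P.bracket x b) := by
  have hbc : b * c ∈ P.grade (s + t) := P.mul_mem hb hc
  have h1 := P.antisymm hx hbc
  have h2 := P.leibniz x hb hc
  have h3 := P.antisymm hc hx
  have h4 := P.antisymm hb hx
  rw [h1, h2, h3, h4]
  have hne : (-1 : k) ≠ 0 := by norm_num
  rw [mul_neg, mul_smul_comm, mul_neg, mul_smul_comm]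
  simp only [smul_neg, neg_neg, smul_add, smul_smul, ← zpow_add₀ hne, neg_add]
  ring_nf

end P0Data
open P0Data

section Helpers
variable {I : Type*} [Fintype I] {V : Type*} [AddCommMonoid V]

lemma nested5 (f : I → I → I → I → I → V) :
    (∑ a, ∑ b, ∑ c, ∑ d, ∑ e, f a b c d e)
      = ∑ x : I × I × I × I × I, f x.1 x.2.1 x.2.2.1 x.2.2.2.1 x.2.2.2.2 := by
  rw [Fintype.sum_prod_type]
  refine Finset.sum_congr rfl fun a _ => ?_
  rw [Fintype.sum_prod_type]
  refine Finset.sum_congr rfl fun b _ => ?_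
  rw [Fintype.sum_prod_type]
  refine Finset.sum_congr rfl fun c _ => ?_
  rw [Fintype.sum_prod_type]

lemma nested4 (f : I → I → I → I → V) :
    (∑ a, ∑ b, ∑ c, ∑ d, f a b c d)
      = ∑ x : I × I × I × I, f x.1 x.2.1 x.2.2.1 x.2.2.2 := by
  rw [Fintype.sum_prod_type]
  refine Finset.sum_congr rfl fun a _ => ?_
  rw [Fintype.sum_prod_type]
  refine Finset.sum_congr rfl fun b _ => ?_
  rw [Fintype.sum_prod_type]

lemma sum5_reindex (f g : I → I → I → I → I → V) (e : (I × I × I × I × I) ≃ (I × I × I × I × I))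
    (h : ∀ x : I × I × I × I × I,
      g x.1 x.2.1 x.2.2.1 x.2.2.2.1 x.2.2.2.2
        = f (e x).1 (e x).2.1 (e x).2.2.1 (e x).2.2.2.1 (e x).2.2.2.2) :
    (∑ a, ∑ b, ∑ c, ∑ d, ∑ e', f a b c d e') = ∑ a, ∑ b, ∑ c, ∑ d, ∑ e', g a b c d e' := by
  rw [nested5 f, nested5 g]
  exact (Fintype.sum_equiv e _ _ h).symm

lemma sum4_reindex (f g : I → I → I → I → V) (e : (I × I × I × I) ≃ (I × I × I × I))
    (h : ∀ x : I × I × I × I,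
      g x.1 x.2.1 x.2.2.1 x.2.2.2 = f (e x).1 (e x).2.1 (e x).2.2.1 (e x).2.2.2) :
    (∑ a, ∑ b, ∑ c, ∑ d, f a b c d) = ∑ a, ∑ b, ∑ c, ∑ d, g a b c d := by
  rw [nested4 f, nested4 g]
  exact (Fintype.sum_equiv e _ _ h).symm

-- test a permutation usage
example (f : I → I → I → I → I → V) :
    (∑ a, ∑ b, ∑ c, ∑ d, ∑ e, f a b c d e) = ∑ a, ∑ b, ∑ c, ∑ d, ∑ e, f b e a d c :=
  sum5_reindex _ _
    ⟨fun y => (y.2.1, y.2.2.2.2, y.1, y.2.2.2.1, y.2.2.1),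
     fun x => (x.2.2.1, x.1, x.2.2.2.2, x.2.2.2.1, x.2.1),
     fun _ => rfl, fun _ => rfl⟩
    (fun x => rfl)

lemma nested3 (f : I → I → I → V) :
    (∑ a, ∑ b, ∑ c, f a b c) = ∑ x : I × I × I, f x.1 x.2.1 x.2.2 := by
  rw [Fintype.sum_prod_type]
  refine Finset.sum_congr rfl fun a _ => ?_
  rw [Fintype.sum_prod_type]

lemma sum3_reindex (f g : I → I → I → V) (e : (I × I × I) ≃ (I × I × I))
    (h : ∀ x : I × I × I, g x.1 x.2.1 x.2.2 = f (e x).1 (e x).2.1 (e x).2.2) :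
    (∑ a, ∑ b, ∑ c, f a b c) = ∑ a, ∑ b, ∑ c, g a b c := by
  rw [nested3 f, nested3 g]
  exact (Fintype.sum_equiv e _ _ h).symm

lemma nested6 (f : I → I → I → I → I → I → V) :
    (∑ a, ∑ b, ∑ c, ∑ d, ∑ e, ∑ g, f a b c d e g)
      = ∑ x : I × I × I × I × I × I,
          f x.1 x.2.1 x.2.2.1 x.2.2.2.1 x.2.2.2.2.1 x.2.2.2.2.2 := by
  rw [Fintype.sum_prod_type]
  refine Finset.sum_congr rfl fun a _ => ?_
  rw [Fintype.sum_prod_type]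
  refine Finset.sum_congr rfl fun b _ => ?_
  rw [Fintype.sum_prod_type]
  refine Finset.sum_congr rfl fun c _ => ?_
  rw [Fintype.sum_prod_type]
  refine Finset.sum_congr rfl fun d _ => ?_
  rw [Fintype.sum_prod_type]

lemma sum6_reindex (f g : I → I → I → I → I → I → V)
    (e : (I × I × I × I × I × I) ≃ (I × I × I × I × I × I))
    (h : ∀ x : I × I × I × I × I × I,
      g x.1 x.2.1 x.2.2.1 x.2.2.2.1 x.2.2.2.2.1 x.2.2.2.2.2
        = f (e x).1 (e x).2.1 (e x).2.2.1 (e x).2.2.2.1 (e x).2.2.2.2.1 (e x).2.2.2.2.2) :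
    (∑ a, ∑ b, ∑ c, ∑ d, ∑ e', ∑ g', f a b c d e' g')
      = ∑ a, ∑ b, ∑ c, ∑ d, ∑ e', ∑ g', g a b c d e' g' := by
  rw [nested6 f, nested6 g]
  exact (Fintype.sum_equiv e _ _ h).symm

end Helpers

lemma key_cancel {k : Type*} [Field k] [CharZero k] {V : Type*} [AddCommGroup V] [Module k V]
    {m : ℕ} (c : Fin m → Fin m → Fin m → k)
    (hanti : ∀ i j l, c i j l = -c j i l)
    (hjac : ∀ i j l n, ∑ t, (c i j t * c t l n + c j l t * c t i n + c l i t * c t j n) = 0)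
    (M : Fin m → Fin m → Fin m → Fin m → V)
    (hM1 : ∀ l a b d, M l a b d = -M l a d b)
    (hM2 : ∀ l a b d, M l a b d = -M l b a d) :
    -(∑ i, ∑ j, ∑ l, ∑ p, ∑ q, (c i j l * c p q j) • M l i q p)
      + (∑ i, ∑ j, ∑ l, ∑ p, ∑ q, (c i j l * c p q i) • M l j q p)
      - (∑ i, ∑ j, ∑ l, ∑ p, ∑ n, (c i j l * c p l n) • M n j i p)
      + (∑ i, ∑ j, ∑ l, ∑ q, ∑ n, (c i j l * c l q n) • M n j i q) = 0 := by
  set P1 : V := ∑ i, ∑ j, ∑ l, ∑ p, ∑ q, (c i j l * c p q j) • M l i q p with hP1def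
  set P3 : V := ∑ i, ∑ j, ∑ l, ∑ p, ∑ n, (c i j l * c p l n) • M n j i p with hP3def
  have hP2 : (∑ i, ∑ j, ∑ l, ∑ p, ∑ q, (c i j l * c p q i) • M l j q p) = -P1 := by
    have step : (∑ i, ∑ j, ∑ l, ∑ p, ∑ q, (c i j l * c p q i) • M l j q p)
        = ∑ i, ∑ j, ∑ l, ∑ p, ∑ q, (c j i l * c p q j) • M l i q p :=
      sum5_reindex _ _
        ⟨fun y => (y.2.1, y.1, y.2.2.1, y.2.2.2.1, y.2.2.2.2),
         fun y => (y.2.1, y.1, y.2.2.1, y.2.2.2.1, y.2.2.2.2),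
         fun _ => rfl, fun _ => rfl⟩ (fun x => rfl)
    have pt : ∀ i j l p q : Fin m,
        (c j i l * c p q j) • M l i q p = -((c i j l * c p q j) • M l i q p) := by
      intro i j l p q; rw [hanti j i l, neg_mul, neg_smul]
    rw [step]
    simp only [pt, Finset.sum_neg_distrib]
    rfl
  have hP4 : (∑ i, ∑ j, ∑ l, ∑ q, ∑ n, (c i j l * c l q n) • M n j i q) = -P3 := by
    have pt : ∀ i j l p n : Fin m,
        (c i j l * c l p n) • M n j i p = -((c i j l * c p l n) • M n j i p) := by
      intro i j l p n; rw [hanti l p n, mul_neg, neg_smul]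
    rw [hP3def]
    simp only [pt, Finset.sum_neg_distrib]
  have c1 : P1 = ∑ l, ∑ i, ∑ q, ∑ p, (∑ t, c i t l * c p q t) • M l i q p := by
    rw [hP1def,
      show (∑ i, ∑ j, ∑ l, ∑ p, ∑ q, (c i j l * c p q j) • M l i q p)
          = ∑ l, ∑ i, ∑ q, ∑ p, ∑ t, (c i t l * c p q t) • M l i q p from
        sum5_reindex _ _
          ⟨fun y => (y.2.1, y.2.2.2.2, y.1, y.2.2.2.1, y.2.2.1),
           fun x => (x.2.2.1, x.1, x.2.2.2.2, x.2.2.2.1, x.2.1),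
           fun _ => rfl, fun _ => rfl⟩ (fun x => rfl)]
    simp only [← Finset.sum_smul]
  have c2 : P3 = ∑ l, ∑ i, ∑ q, ∑ p, (∑ t, c q i t * c p t l) • M l i q p := by
    rw [hP3def,
      show (∑ i, ∑ j, ∑ l, ∑ p, ∑ n, (c i j l * c p l n) • M n j i p)
          = ∑ l, ∑ i, ∑ q, ∑ p, ∑ t, (c q i t * c p t l) • M l i q p from
        sum5_reindex _ _
          ⟨fun y => (y.2.2.1, y.2.1, y.2.2.2.2, y.2.2.2.1, y.1),
           fun x => (x.2.2.2.2, x.2.1, x.1, x.2.2.2.1, x.2.2.1),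
           fun _ => rfl, fun _ => rfl⟩ (fun x => rfl)]
    simp only [← Finset.sum_smul]
  -- scalar Jacobi consequence
  have hs : ∀ i q p l : Fin m,
      (∑ t, c i t l * c p q t) + (∑ t, c q i t * c p t l) = ∑ t, c i p t * c t q l := by
    intro i q p l
    have h := hjac p q i l
    have pt : ∀ t : Fin m, c p q t * c t i l + c q i t * c t p l + c i p t * c t q l
        = -((c i t l * c p q t + c q i t * c p t l) - c i p t * c t q l) := by
      intro t; rw [hanti t i l, hanti t p l]; ring
    simp only [pt, Finset.sum_neg_distrib, neg_eq_zero, Finset.sum_sub_distrib,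
      Finset.sum_add_distrib, sub_eq_zero] at h
    exact h
  have hA : P1 + P3 = ∑ l, ∑ i, ∑ q, ∑ p, (∑ t, c i p t * c t q l) • M l i q p := by
    rw [c1, c2]
    simp only [← Finset.sum_add_distrib, ← add_smul, hs]
  set A1 : V := ∑ l, ∑ i, ∑ q, ∑ p, (∑ t, c i p t * c t q l) • M l i q p with hA1def
  -- A1 = -A2 by swapping q and p
  have hA2 : A1 = -(∑ l, ∑ i, ∑ q, ∑ p, (∑ t, c i q t * c t p l) • M l i q p) := by
    have step : A1 = ∑ l, ∑ i, ∑ q, ∑ p, (∑ t, c i q t * c t p l) • M l i p q := by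
      rw [hA1def]
      exact sum4_reindex _ _
        ⟨fun y => (y.1, y.2.1, y.2.2.2, y.2.2.1),
         fun y => (y.1, y.2.1, y.2.2.2, y.2.2.1),
         fun _ => rfl, fun _ => rfl⟩ (fun x => rfl)
    have pt : ∀ l i q p : Fin m, (∑ t, c i q t * c t p l) • M l i p q
        = -((∑ t, c i q t * c t p l) • M l i q p) := by
      intro l i q p; rw [hM1 l i p q, smul_neg]
    rw [step]
    simp only [pt, Finset.sum_neg_distrib]
  -- A1 = A3 by swapping i and q
  have hA3 : A1 = ∑ l, ∑ i, ∑ q, ∑ p, (∑ t, c p q t * c t i l) • M l i q p := by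
    have step : A1 = ∑ l, ∑ i, ∑ q, ∑ p, (∑ t, c q p t * c t i l) • M l q i p := by
      rw [hA1def]
      exact sum4_reindex _ _
        ⟨fun y => (y.1, y.2.2.1, y.2.1, y.2.2.2),
         fun y => (y.1, y.2.2.1, y.2.1, y.2.2.2),
         fun _ => rfl, fun _ => rfl⟩ (fun x => rfl)
    have pt : ∀ l i q p : Fin m, (∑ t, c q p t * c t i l) • M l q i p
        = (∑ t, c p q t * c t i l) • M l i q p := by
      intro l i q p
      rw [hM2 l q i p, smul_neg]
      rw [show (∑ t, c q p t * c t i l) = -∑ t, c p q t * c t i l by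
        rw [← Finset.sum_neg_distrib]
        exact Finset.sum_congr rfl fun t _ => by rw [hanti q p t, neg_mul]]
      rw [neg_smul, neg_neg]
    rw [step]
    exact Finset.sum_congr rfl fun l _ => Finset.sum_congr rfl fun i _ =>
      Finset.sum_congr rfl fun q _ => Finset.sum_congr rfl fun p _ => pt l i q p
  -- Jacobi again: A3 = A2 - A1
  have hs2 : ∀ l i q p : Fin m,
      (∑ t, c p q t * c t i l) = (∑ t, c i q t * c t p l) - (∑ t, c i p t * c t q l) := by
    intro l i q p
    have h := hjac p q i l
    have pt : ∀ t : Fin m, c p q t * c t i l + c q i t * c t p l + c i p t * c t q l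
        = c p q t * c t i l - (c i q t * c t p l - c i p t * c t q l) := by
      intro t; rw [hanti q i t]; ring
    simp only [pt, Finset.sum_sub_distrib] at h
    exact sub_eq_zero.mp h
  have e5 : A1 = (∑ l, ∑ i, ∑ q, ∑ p, (∑ t, c i q t * c t p l) • M l i q p) - A1 := by
    have e3 : A1 = ∑ l, ∑ i, ∑ q, ∑ p,
        (((∑ t, c i q t * c t p l) - (∑ t, c i p t * c t q l)) • M l i q p) := by
      rw [hA3]
      exact Finset.sum_congr rfl fun l _ => Finset.sum_congr rfl fun i _ =>
        Finset.sum_congr rfl fun q _ => Finset.sum_congr rfl fun p _ => by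
          rw [hs2 l i q p]
    conv_lhs => rw [e3]
    simp only [sub_smul, Finset.sum_sub_distrib]
    rfl
  have e6 : (∑ l, ∑ i, ∑ q, ∑ p, (∑ t, c i q t * c t p l) • M l i q p) = -A1 := by
    rw [hA2, neg_neg]
  rw [e6] at e5
  have hA0 : A1 = 0 := by
    have h3 : A1 + A1 + A1 = 0 := by nth_rewrite 1 [e5]; abel
    have h4 : ((3 : k)) • A1 = 0 := by
      rw [show (3:k) = 1 + 1 + 1 by norm_num, add_smul, add_smul, one_smul]
      exact h3
    rcases smul_eq_zero.mp h4 with h | h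
    · exact absurd h (by norm_num)
    · exact h
  have hP13 : P1 + P3 = 0 := by rw [hA]; exact hA0
  have hP3' : P3 = -P1 := (neg_eq_of_add_eq_zero_right hP13).symm
  rw [hP2, hP4, hP3']
  abel




/-- Faddeev–Popov action.  Let `g` be a finite dimensional Lie algebra
with basis `β₁*, …, β_m*` and structure constants `c`, acting by derivations `D i` on a
commutative algebra `O`, and let `S₀ ∈ O` be invariant.  In the `P₀`-algebra
`A = Λ_O(Der O) ⊗ Sym(g) ⊗ Λ(g*)` (presented here by its generators `ι f`, `ξ i` of
degree -1, `β i` of degree 1, `βs i` of degree -2 and canonical bracket relations), the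
Faddeev–Popov element `S = S₀ + Σ θᵢ βⁱ - ½ Σ c_{ij}^ℓ β_ℓ* βⁱ βʲ` satisfies `[S,S] = 0`. -/
theorem faddeev_popov_master_equation {k O A : Type*} [Field k] [CharZero k]
    [CommRing O] [Algebra k O] [Ring A] [Algebra k A]
    (P : P0Data k A) (m : ℕ)
    (c : Fin m → Fin m → Fin m → k)
    (hc_anti : ∀ i j l, c i j l = -c j i l)
    (hc_jac : ∀ i j l n, ∑ t, (c i j t * c t l n + c j l t * c t i n + c l i t * c t j n) = 0)
    (D : Fin m → Derivation k O O)
    (hrep : ∀ i j, ⁅D i, D j⁆ = ∑ l, c i j l • D l)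
    (S₀ : O) (hinv : ∀ i, D i S₀ = 0)
    (ι : O →ₐ[k] A) (ξ β βs : Fin m → A)
    (hι : ∀ f : O, ι f ∈ P.grade 0)
    (hξ : ∀ i, ξ i ∈ P.grade (-1))
    (hβ : ∀ i, β i ∈ P.grade 1)
    (hβs : ∀ i, βs i ∈ P.grade (-2))
    -- canonical bracket relations
    (hb_ff : ∀ f g : O, P.bracket (ι f) (ι g) = 0)
    (hb_fξ : ∀ (f : O) (i), P.bracket (ι f) (ξ i) = ι (D i f))
    (hb_ξξ : ∀ i j, P.bracket (ξ i) (ξ j) = ∑ l, c i j l • ξ l)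
    (hb_ββs : ∀ i j, P.bracket (β i) (βs j) = if i = j then 1 else 0)
    (hb_fβ : ∀ (f : O) (i), P.bracket (ι f) (β i) = 0)
    (hb_fβs : ∀ (f : O) (i), P.bracket (ι f) (βs i) = 0)
    (hb_ξβ : ∀ i j, P.bracket (ξ i) (β j) = 0)
    (hb_ξβs : ∀ i j, P.bracket (ξ i) (βs j) = 0)
    (hb_ββ : ∀ i j, P.bracket (β i) (β j) = 0)
    (hb_βsβs : ∀ i j, P.bracket (βs i) (βs j) = 0) :
    P.bracket
      (ι S₀ + ∑ i, ξ i * β i -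
        (2 : k)⁻¹ • ∑ i, ∑ j, ∑ l, c i j l • (βs l * β i * β j))
      (ι S₀ + ∑ i, ξ i * β i -
        (2 : k)⁻¹ • ∑ i, ∑ j, ∑ l, c i j l • (βs l * β i * β j)) = 0 := by
  classical
  -- graded commutation lemmas for generators
  have hcββ : ∀ a b, β a * β b = -(β b * β a) := by
    intro a b
    have h := P.gcomm (hβ a) (hβ b)
    norm_num at h
    exact h
  have hcξβ : ∀ a b, ξ a * β b = -(β b * ξ a) := by
    intro a b
    have h := P.gcomm (hξ a) (hβ b)
    norm_num at h
    exact h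
  have hcββs : ∀ a b, β a * βs b = βs b * β a := by
    intro a b
    have h := P.gcomm (hβ a) (hβs b)
    norm_num at h
    exact h
  have hββ' : ∀ a b (x : A), β a * (β b * x) = -(β b * (β a * x)) := by
    intro a b x
    rw [← mul_assoc, hcββ a b, neg_mul, mul_assoc]
  have hξβ' : ∀ a b (x : A), ξ a * (β b * x) = -(β b * (ξ a * x)) := by
    intro a b x
    rw [← mul_assoc, hcξβ a b, neg_mul, mul_assoc]
  have hββs' : ∀ a b (x : A), β a * (βs b * x) = βs b * (β a * x) := by
    intro a b x
    rw [← mul_assoc, hcββs a b, mul_assoc]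
  -- grade memberships of composites
  have hξβm : ∀ i, ξ i * β i ∈ P.grade 0 := by
    intro i
    have h := P.mul_mem (hξ i) (hβ i)
    norm_num at h
    exact h
  have hβsβm : ∀ l i, βs l * β i ∈ P.grade (-1) := by
    intro l i
    have h := P.mul_mem (hβs l) (hβ i)
    norm_num at h
    exact h
  have hTm : ∀ l i j, βs l * β i * β j ∈ P.grade 0 := by
    intro l i j
    have h := P.mul_mem (hβsβm l i) (hβ j)
    norm_num at h
    exact h
  -- flipped atomic brackets
  have bβξ : ∀ a b, P.bracket (β a) (ξ b) = 0 := by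
    intro a b
    rw [P.antisymm (hβ a) (hξ b), hb_ξβ]
    simp
  have bβιS : ∀ a, P.bracket (β a) (ι S₀) = 0 := by
    intro a
    rw [P.antisymm (hβ a) (hι S₀), hb_fβ]
    simp
  have bβsβ : ∀ l q, P.bracket (βs l) (β q) = -(if q = l then 1 else 0) := by
    intro l q
    rw [P.antisymm (hβs l) (hβ q), hb_ββs]
    norm_num
  -- composite brackets
  have k1 : ∀ i, P.bracket (ι S₀) (ξ i * β i) = 0 := by
    intro i
    rw [P.rightLeibniz (hι S₀) (hξ i) (hβ i), hb_fβ, hb_fξ, hinv]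
    simp
  have k2 : ∀ l i j, P.bracket (ι S₀) (βs l * β i * β j) = 0 := by
    intro l i j
    rw [P.rightLeibniz (hι S₀) (hβsβm l i) (hβ j), P.rightLeibniz (hι S₀) (hβs l) (hβ i),
      hb_fβ, hb_fβ, hb_fβs]
    simp
  have k3 : ∀ i j, P.bracket (ξ i) (ξ j * β j) = -(β j * ∑ l, c i j l • ξ l) := by
    intro i j
    rw [P.rightLeibniz (hξ i) (hξ j) (hβ j), hb_ξβ, hb_ξξ]
    norm_num
  have k4 : ∀ i j, P.bracket (β i) (ξ j * β j) = 0 := by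
    intro i j
    rw [P.rightLeibniz (hβ i) (hξ j) (hβ j), hb_ββ, bβξ]
    simp
  have k5 : ∀ i j, P.bracket (ξ i * β i) (ξ j * β j)
      = ∑ l, c i j l • (β i * (β j * ξ l)) := by
    intro i j
    rw [P.leibniz _ (hξ i) (hβ i), k3, k4]
    norm_num [Finset.mul_sum, mul_smul_comm, mul_neg]
  have k6 : ∀ a l i j, P.bracket (ξ a) (βs l * β i * β j) = 0 := by
    intro a l i j
    rw [P.rightLeibniz (hξ a) (hβsβm l i) (hβ j), P.rightLeibniz (hξ a) (hβs l) (hβ i),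
      hb_ξβ, hb_ξβ, hb_ξβs]
    simp
  have k7 : ∀ a l i, P.bracket (β a) (βs l * β i) = if a = l then β i else 0 := by
    intro a l i
    rw [P.rightLeibniz (hβ a) (hβs l) (hβ i), hb_ββ, hb_ββs]
    norm_num [mul_ite, mul_one, mul_zero]
  have k8 : ∀ a l i j, P.bracket (β a) (βs l * β i * β j)
      = -(if a = l then β j * β i else 0) := by
    intro a l i j
    rw [P.rightLeibniz (hβ a) (hβsβm l i) (hβ j), hb_ββ, k7]
    norm_num [mul_ite, mul_zero]
    split <;> simp
  have k9 : ∀ a l i j, P.bracket (ξ a * β a) (βs l * β i * β j)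
      = -(if a = l then ξ a * (β j * β i) else 0) := by
    intro a l i j
    rw [P.leibniz _ (hξ a) (hβ a), k8, k6]
    norm_num [mul_ite, mul_zero, mul_neg]
  have k11 : ∀ l n p, P.bracket (βs l) (βs n * β p) = -(if p = l then βs n else 0) := by
    intro l n p
    rw [P.rightLeibniz (hβs l) (hβs n) (hβ p), bβsβ, hb_βsβs]
    norm_num [mul_ite, mul_zero, mul_one, mul_neg]
  have k12 : ∀ l n p q, P.bracket (βs l) (βs n * β p * β q)
      = (if q = l then βs n * β p else 0) - (if p = l then β q * βs n else 0) := by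
    intro l n p q
    rw [P.rightLeibniz (hβs l) (hβsβm n p) (hβ q), bβsβ, k11]
    norm_num [mul_ite, mul_zero, mul_one, mul_neg, sub_eq_add_neg]
    split <;> simp
  have k13 : ∀ l i n p q, P.bracket (βs l * β i) (βs n * β p * β q)
      = -(if i = n then βs l * (β q * β p) else 0)
        + ((if q = l then β i * (βs n * β p) else 0)
          - (if p = l then β i * (β q * βs n) else 0)) := by
    intro l i n p q
    rw [P.leibniz _ (hβs l) (hβ i), k8, k12]
    norm_num [mul_ite, mul_zero, mul_neg, mul_sub]
  have iten : ∀ (Q : Prop) [Decidable Q] (x : A), (if Q then -x else 0) = -(if Q then x else 0) := by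
    intro Q _ x
    split <;> simp
  have k14 : ∀ l i j n p q, P.bracket (βs l * β i * β j) (βs n * β p * β q)
      = -(if j = n then (βs l * β i) * (β q * β p) else 0)
        + (if i = n then β j * (βs l * (β q * β p)) else 0)
        - (if q = l then β j * (β i * (βs n * β p)) else 0)
        + (if p = l then β j * (β i * (β q * βs n)) else 0) := by
    intro l i j n p q
    rw [P.leibniz _ (hβsβm l i) (hβ j), k8, k13]
    norm_num [mul_ite, mul_zero, mul_neg, mul_add, mul_sub, neg_one_smul,
      smul_ite, smul_zero, smul_neg, neg_neg, iten]
    abel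
  -- abbreviations
  set y : A := ∑ i, ξ i * β i with hy
  set C0 : A := ∑ i, ∑ j, ∑ l, c i j l • (βs l * β i * β j) with hC0
  have hym : y ∈ P.grade 0 := Submodule.sum_mem _ fun i _ => hξβm i
  have hC0m : C0 ∈ P.grade 0 := Submodule.sum_mem _ fun i _ => Submodule.sum_mem _
    fun j _ => Submodule.sum_mem _ fun l _ => Submodule.smul_mem _ _ (hTm l i j)
  -- brackets with ι S₀
  have B1 : P.bracket (ι S₀) y = 0 := by
    rw [hy, map_sum]
    simp [k1]
  have B1' : P.bracket y (ι S₀) = 0 := by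
    rw [P.symm0 hym (hι S₀)]
    exact B1
  have B2 : P.bracket (ι S₀) C0 = 0 := by
    rw [hC0]
    simp [map_sum, map_smul, k2]
  have B2' : P.bracket C0 (ι S₀) = 0 := by
    rw [P.symm0 hC0m (hι S₀)]
    exact B2
  -- the ghost-number-zero cubic sum
  have B3 : P.bracket y y = ∑ i, ∑ j, ∑ l, c i j l • (β i * (β j * ξ l)) := by
    rw [hy]
    simp only [map_sum, LinearMap.sum_apply, k5]
    exact Finset.sum_comm
  have B4 : P.bracket y C0 = ∑ i, ∑ j, ∑ l, c i j l • (β i * (β j * ξ l)) := by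
    have mono : ∀ a i j, -(c i j a • (ξ a * (β j * β i)))
        = c i j a • (β i * (β j * ξ a)) := by
      intro a i j
      rw [hξβ' a j, hcξβ a i, mul_neg, neg_neg, hββ' j i, smul_neg, neg_neg]
    rw [hy, hC0]
    simp only [map_sum, LinearMap.sum_apply, map_smul, LinearMap.smul_apply,
      Finset.smul_sum, smul_smul, k9, smul_neg, smul_ite, smul_zero, neg_zero,
      Finset.sum_neg_distrib, Finset.sum_ite_eq', Finset.sum_ite_eq,
      Finset.mem_univ, if_true]
    simp only [← Finset.sum_neg_distrib, mono]
  have B4' : P.bracket C0 y = ∑ i, ∑ j, ∑ l, c i j l • (β i * (β j * ξ l)) := by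
    rw [P.symm0 hC0m hym]
    exact B4
  -- the quadratic ghost bracket vanishes
  have B5 : P.bracket C0 C0 = 0 := by
    have e1 : P.bracket C0 C0 = ∑ p, ∑ q, ∑ n, ∑ i, ∑ j, ∑ l,
        (c p q n * c i j l) • P.bracket (βs l * β i * β j) (βs n * β p * β q) := by
      rw [hC0]
      simp only [map_sum, LinearMap.sum_apply, map_smul, LinearMap.smul_apply,
        Finset.smul_sum, smul_smul]
    have e1' : P.bracket C0 C0 = ∑ i, ∑ j, ∑ l, ∑ p, ∑ q, ∑ n,
        (c i j l * c p q n) • P.bracket (βs l * β i * β j) (βs n * β p * β q) := by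
      rw [e1]
      exact sum6_reindex _ _
        ⟨fun y => (y.2.2.2.1, y.2.2.2.2.1, y.2.2.2.2.2, y.1, y.2.1, y.2.2.1),
         fun x => (x.2.2.2.1, x.2.2.2.2.1, x.2.2.2.2.2, x.1, x.2.1, x.2.2.1),
         fun _ => rfl, fun _ => rfl⟩
        (fun x => by simp only [Equiv.coe_fn_mk]; rw [mul_comm])
    have e2 : P.bracket C0 C0 =
        -(∑ i, ∑ j, ∑ l, ∑ p, ∑ q, (c i j l * c p q j) • ((βs l * β i) * (β q * β p)))
        + (∑ i, ∑ j, ∑ l, ∑ p, ∑ q, (c i j l * c p q i) • (β j * (βs l * (β q * β p))))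
        - (∑ i, ∑ j, ∑ l, ∑ p, ∑ n, (c i j l * c p l n) • (β j * (β i * (βs n * β p))))
        + (∑ i, ∑ j, ∑ l, ∑ q, ∑ n, (c i j l * c l q n) • (β j * (β i * (β q * βs n)))) := by
      rw [e1']
      simp only [k14, smul_add, smul_sub, smul_neg, smul_ite, smul_zero,
        Finset.sum_add_distrib, Finset.sum_sub_distrib, Finset.sum_neg_distrib,
        Finset.sum_ite_irrel, Finset.sum_const_zero, Finset.sum_ite_eq,
        Finset.sum_ite_eq', Finset.mem_univ, if_true]
    have n1 : ∀ l i q p, (βs l * β i) * (β q * β p) = βs l * (β i * (β q * β p)) := by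
      intro l i q p
      rw [mul_assoc]
    have n2 : ∀ l j q p, β j * (βs l * (β q * β p)) = βs l * (β j * (β q * β p)) := by
      intro l j q p
      rw [hββs']
    have n3 : ∀ n j i p, β j * (β i * (βs n * β p)) = βs n * (β j * (β i * β p)) := by
      intro n j i p
      rw [hββs' i n, hββs' j n]
    have n4 : ∀ n j i q, β j * (β i * (β q * βs n)) = βs n * (β j * (β i * β q)) := by
      intro n j i q
      rw [hcββs q n, hββs' i n, hββs' j n]
    rw [e2]
    simp only [n1, n2, n3, n4]
    exact key_cancel c hc_anti hc_jac (fun l a b d => βs l * (β a * (β b * β d)))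
      (fun l a b d => by rw [hcββ b d, mul_neg, mul_neg])
      (fun l a b d => by rw [hββ' a b, mul_neg])
  -- final assembly
  have expand : P.bracket (ι S₀ + y - (2:k)⁻¹ • C0) (ι S₀ + y - (2:k)⁻¹ • C0) =
      (P.bracket (ι S₀) (ι S₀) + P.bracket y (ι S₀) - (2:k)⁻¹ • P.bracket C0 (ι S₀))
      + (P.bracket (ι S₀) y + P.bracket y y - (2:k)⁻¹ • P.bracket C0 y)
      - (2:k)⁻¹ • (P.bracket (ι S₀) C0 + P.bracket y C0
          - (2:k)⁻¹ • P.bracket C0 C0) := by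
    simp only [map_add, map_sub, map_smul, LinearMap.add_apply, LinearMap.sub_apply,
      LinearMap.smul_apply]
  rw [expand, hb_ff, B1, B1', B2, B2', B3, B4, B4', B5]
  generalize (∑ i, ∑ j, ∑ l, c i j l • (β i * (β j * ξ l)) : A) = W
  have half : (2:k)⁻¹ • W + (2:k)⁻¹ • W = W := by
    rw [← add_smul]
    norm_num
  simp only [smul_zero, zero_add, add_zero, sub_zero]
  rw [sub_sub, half, sub_self]
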